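/- arXiv:math/0601674 — 4 statements merged into one kernel-verified Lean document; each statement's English description precedes it below -/
import Mathlib

section
/- Let K be a field of characteristic zero and K' an algebraically closed field extension of K. Let P and Q be ideals of the polynomial ring K[a₁,…,aₘ], with P prime and Q ⊄ P. Then the Zariski closure in K'^m of V(P') \ V(Q') equals V(P'), where P' and Q' denote the extensions of P and Q to K'[a₁,…,aₘ]. -/
open MvPolynomial TensorProduct

noncomputable section AuxBC

variable {K K' A : Type*} [Field K] [Field K'] [Algebra K K']
  [CommRing A] [Algebra K A] {ι : Type*} [DecidableEq ι]

/-- Coordinate description of `K' ⊗[K] A` with respect to a basis of `K'` over `K`. -/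
noncomputable def bcEquiv (b : Module.Basis ι K K') : K' ⊗[K] A ≃ₗ[K] (ι →₀ A) :=
  (TensorProduct.congr b.repr (LinearEquiv.refl K A)).trans
    (TensorProduct.finsuppScalarLeft K A ι)

lemma bcEquiv_tmul (b : Module.Basis ι K K') (k : K') (a : A) (i : ι) :
    bcEquiv b (k ⊗ₜ[K] a) i = b.repr k i • a := by
  simp [bcEquiv, LinearEquiv.trans_apply]

lemma bcEquiv_symm_single (b : Module.Basis ι K K') (i : ι) (a : A) :
    (bcEquiv b).symm (Finsupp.single i a) = b i ⊗ₜ[K] a := by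
  simp [bcEquiv, LinearEquiv.symm_trans_apply, TensorProduct.congr_symm_tmul]

lemma mem_of_mem_baseChange (b : Module.Basis ι K K') {N : Submodule K A} {y : K' ⊗[K] A}
    (hy : y ∈ N.baseChange K') (i : ι) : bcEquiv b y i ∈ N := by
  have h1 : y ∈ LinearMap.range (LinearMap.baseChange K' N.subtype) := by
    rw [Submodule.baseChange_eq_span] at hy
    refine Submodule.span_induction ?_ ?_ ?_ ?_ hy
    · rintro _ ⟨n, hn, rfl⟩
      exact ⟨(1 : K') ⊗ₜ[K] (⟨n, hn⟩ : N), by simp⟩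
    · exact Submodule.zero_mem _
    · intro x y _ _ hx hy; exact Submodule.add_mem _ hx hy
    · intro a x _ hx; exact Submodule.smul_mem _ a hx
  clear hy
  obtain ⟨w, rfl⟩ := h1
  induction w using TensorProduct.induction_on with
  | zero => simpa using N.zero_mem
  | tmul k n =>
      rw [LinearMap.baseChange_tmul, Submodule.subtype_apply, bcEquiv_tmul]
      exact N.smul_mem _ n.2
  | add x y hx hy =>
      rw [map_add, map_add, Finsupp.add_apply]
      exact N.add_mem hx hy

lemma mem_baseChange_of_coords (b : Module.Basis ι K K') {N : Submodule K A} {y : K' ⊗[K] A}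
    (h : ∀ i, bcEquiv b y i ∈ N) : y ∈ N.baseChange K' := by
  rw [← (bcEquiv b).symm_apply_apply y]
  generalize hc : bcEquiv b y = c at h
  clear hc y
  induction c using Finsupp.induction with
  | zero => simp
  | single_add i a c hic ha0 ih =>
      rw [map_add]
      refine Submodule.add_mem _ ?_ (ih fun j => ?_)
      · have haN : a ∈ N := by
          have hi := h i
          rwa [Finsupp.add_apply, Finsupp.single_eq_same,
            Finsupp.notMem_support_iff.mp hic, add_zero] at hi
        rw [bcEquiv_symm_single]
        exact Submodule.tmul_mem_baseChange_of_mem _ haN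
      · by_cases hj : j = i
        · subst hj
          rw [Finsupp.notMem_support_iff.mp hic]
          exact N.zero_mem
        · have hjh := h j
          rwa [Finsupp.add_apply, Finsupp.single_eq_of_ne' (Ne.symm hj), zero_add] at hjh

lemma bcEquiv_mul_tmul_one (b : Module.Basis ι K K') (y : K' ⊗[K] A) (g : A) (i : ι) :
    bcEquiv b (y * ((1 : K') ⊗ₜ[K] g)) i = bcEquiv b y i * g := by
  induction y using TensorProduct.induction_on with
  | zero => simp
  | tmul k a =>
      rw [Algebra.TensorProduct.tmul_mul_tmul, mul_one, bcEquiv_tmul, bcEquiv_tmul,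
        smul_mul_assoc]
  | add x z hx hz =>
      rw [add_mul, map_add, map_add, Finsupp.add_apply, Finsupp.add_apply, hx, hz, add_mul]

lemma mul_mem_baseChange_ideal (P : Ideal A) (r : K' ⊗[K] A) {y : K' ⊗[K] A}
    (hy : y ∈ (P.restrictScalars K).baseChange K') :
    r * y ∈ (P.restrictScalars K).baseChange K' := by
  rw [Submodule.baseChange_eq_span] at hy
  refine Submodule.span_induction (p := fun y _ => r * y ∈ (P.restrictScalars K).baseChange K')
    ?_ ?_ ?_ ?_ hy
  · rintro _ ⟨p, hp, rfl⟩
    induction r using TensorProduct.induction_on with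
    | zero => simpa using Submodule.zero_mem _
    | tmul k a =>
        have : (k ⊗ₜ[K] a) * (TensorProduct.mk K K' A 1 p) = k ⊗ₜ[K] (a * p) := by
          simp [Algebra.TensorProduct.tmul_mul_tmul]
        rw [this]
        exact Submodule.tmul_mem_baseChange_of_mem _ (P.mul_mem_left a hp)
    | add x z hx hz =>
        rw [add_mul]
        exact Submodule.add_mem _ hx hz
  · simp
  · intro x z _ _ hx hz
    rw [mul_add]
    exact Submodule.add_mem _ hx hz
  · intro a x _ hx
    rw [mul_smul_comm]
    exact Submodule.smul_mem _ a hx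

lemma mem_map_includeRight_iff (P : Ideal A) (y : K' ⊗[K] A) :
    y ∈ P.map (Algebra.TensorProduct.includeRight (R := K) (A := K') (B := A)).toRingHom
      ↔ y ∈ (P.restrictScalars K).baseChange K' := by
  constructor
  · intro hy
    refine Submodule.span_induction
      (p := fun y _ => y ∈ (P.restrictScalars K).baseChange K') ?_ ?_ ?_ ?_ hy
    · rintro _ ⟨p, hp, rfl⟩
      exact Submodule.tmul_mem_baseChange_of_mem 1 hp
    · exact Submodule.zero_mem _
    · intro x z _ _ hx hz; exact Submodule.add_mem _ hx hz
    · intro r x _ hx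
      rw [smul_eq_mul]
      exact mul_mem_baseChange_ideal P r hx
  · intro hy
    rw [Submodule.baseChange_eq_span] at hy
    refine Submodule.span_induction
      (p := fun y _ => y ∈ P.map
        (Algebra.TensorProduct.includeRight (R := K) (A := K') (B := A)).toRingHom)
      ?_ ?_ ?_ ?_ hy
    · rintro _ ⟨p, hp, rfl⟩
      exact Ideal.mem_map_of_mem _ hp
    · exact zero_mem _
    · intro _ _ _ _ hx hz; exact add_mem hx hz
    · intro a x _ hx
      rw [Algebra.smul_def]
      exact Ideal.mul_mem_left _ _ hx

end AuxBC

section Key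

variable {K K' A : Type*} [Field K] [Field K'] [Algebra K K'] [CommRing A] [Algebra K A]

lemma key_cancel (P : Ideal A) (hP : P.IsPrime) {g : A} (hg : g ∉ P)
    {y : K' ⊗[K] A}
    (hy : y * ((1 : K') ⊗ₜ[K] g) ∈
      P.map (Algebra.TensorProduct.includeRight (R := K) (A := K') (B := A)).toRingHom) :
    y ∈ P.map (Algebra.TensorProduct.includeRight (R := K) (A := K') (B := A)).toRingHom := by
  classical
  let b := Module.Basis.ofVectorSpace K K'
  rw [mem_map_includeRight_iff] at hy ⊢
  refine mem_baseChange_of_coords b fun i => ?_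
  have h := mem_of_mem_baseChange b hy i
  rw [bcEquiv_mul_tmul_one] at h
  exact (hP.mem_or_mem h).resolve_right hg

lemma key_cancel_mv {m : ℕ} (P : Ideal (MvPolynomial (Fin m) K)) (hP : P.IsPrime)
    {g : MvPolynomial (Fin m) K} (hg : g ∉ P) {f : MvPolynomial (Fin m) K'}
    (hf : f * MvPolynomial.map (algebraMap K K') g ∈
      P.map (MvPolynomial.map (algebraMap K K'))) :
    f ∈ P.map (MvPolynomial.map (algebraMap K K')) := by
  set e := (MvPolynomial.algebraTensorAlgEquiv (R := K) (σ := Fin m) (A := K')).toRingEquiv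
    with he
  have hcomp : (e : K' ⊗[K] MvPolynomial (Fin m) K →+* MvPolynomial (Fin m) K').comp
      (Algebra.TensorProduct.includeRight (R := K) (A := K')
        (B := MvPolynomial (Fin m) K)).toRingHom = MvPolynomial.map (algebraMap K K') := by
    refine RingHom.ext fun p => ?_
    simp [he, MvPolynomial.algebraTensorAlgEquiv_tmul]
  have hmap : P.map (MvPolynomial.map (algebraMap K K')) =
      (P.map (Algebra.TensorProduct.includeRight (R := K) (A := K')
        (B := MvPolynomial (Fin m) K)).toRingHom).map
        (e : K' ⊗[K] MvPolynomial (Fin m) K →+* MvPolynomial (Fin m) K') := by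
    rw [Ideal.map_map, hcomp]
  have hiff : ∀ z : MvPolynomial (Fin m) K',
      z ∈ P.map (MvPolynomial.map (algebraMap K K')) ↔
        e.symm z ∈ P.map (Algebra.TensorProduct.includeRight (R := K) (A := K')
          (B := MvPolynomial (Fin m) K)).toRingHom := by
    intro z
    rw [hmap, Ideal.map_comap_of_equiv, Ideal.mem_comap]
  have hsymm_g : e.symm (MvPolynomial.map (algebraMap K K') g)
      = (1 : K') ⊗ₜ[K] g := by
    apply e.injective
    rw [RingEquiv.apply_symm_apply]
    simp [he, MvPolynomial.algebraTensorAlgEquiv_tmul]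
  rw [hiff] at hf ⊢
  rw [map_mul, hsymm_g] at hf
  exact key_cancel P hP hg hf

end Key

theorem closure_diff_zeroLocus_extension_of_prime
    (m : ℕ) (K K' : Type*) [Field K] [Field K'] [Algebra K K']
    [CharZero K] [IsAlgClosed K']
    (P Q : Ideal (MvPolynomial (Fin m) K)) (hP : P.IsPrime) (hQ : ¬ Q ≤ P) :
    zeroLocus K' (vanishingIdeal K'
        (zeroLocus K' (P.map (MvPolynomial.map (algebraMap K K'))) \
         zeroLocus K' (Q.map (MvPolynomial.map (algebraMap K K'))))) =
      zeroLocus K' (P.map (MvPolynomial.map (algebraMap K K'))) := by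
  set φ := MvPolynomial.map (algebraMap K K')
  apply subset_antisymm
  · exact zeroLocus_anti_mono
      (le_trans (le_vanishingIdeal_zeroLocus _) (vanishingIdeal_anti_mono Set.diff_subset))
  · intro x hx
    rw [mem_zeroLocus_iff]
    intro f hf
    obtain ⟨g, hgQ, hgP⟩ := SetLike.not_le_iff_exists.mp hQ
    have hfg : f * φ g ∈ (P.map φ).radical := by
      rw [← vanishingIdeal_zeroLocus_eq_radical (K := K'), mem_vanishingIdeal_iff]
      intro z hz
      by_cases hgz : MvPolynomial.aeval z (φ g) = 0
      · rw [map_mul, hgz, mul_zero]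
      · have hzD : z ∈ zeroLocus K' (P.map φ) \ zeroLocus K' (Q.map φ) :=
          ⟨hz, fun hzQ => hgz (mem_zeroLocus_iff.mp hzQ _ (Ideal.mem_map_of_mem _ hgQ))⟩
        rw [map_mul, mem_vanishingIdeal_iff.mp hf z hzD, zero_mul]
    obtain ⟨n, hn⟩ := hfg
    rw [mul_pow, ← map_pow] at hn
    have hgn : g ^ n ∉ P := fun h => hgP (hP.mem_of_pow_mem n h)
    have hfn : f ^ n ∈ P.map φ := key_cancel_mv P hP hgn hn
    have hev : (MvPolynomial.aeval x f) ^ n = 0 := by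
      have := mem_zeroLocus_iff.mp hx _ hfn
      rwa [map_pow] at this
    rcases Nat.eq_zero_or_pos n with rfl | hn0
    · simpa using hev
    · exact (pow_eq_zero_iff hn0.ne').mp hev
end

section
/- Let K be a field of characteristic zero and K' an algebraically closed field extension of K. Let N be a radical ideal of K[a₁,…,aₘ] and let h ∈ K[a₁,…,aₘ] be a polynomial such that h does not belong to any minimal prime of N over K[a₁,…,aₘ]. Then the Zariski closure in K'^m of V(N') \ V(h) equals V(N'), where N' denotes the extension of N to K'[a₁,…,aₘ] and V(h) is the zero locus in K'^m of h viewed in K'[a₁,…,aₘ]. -/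
open MvPolynomial

section Aux

variable {m : ℕ} {K K' : Type*} [Field K] [Field K'] [Algebra K K']

/-- Apply a `K`-linear functional `ℓ : K' →ₗ[K] K` to each coefficient of a polynomial. -/
noncomputable def pil (ℓ : K' →ₗ[K] K) (p : MvPolynomial (Fin m) K') :
    MvPolynomial (Fin m) K :=
  ∑ n ∈ p.support, monomial n (ℓ (p.coeff n))

lemma coeff_pil (ℓ : K' →ₗ[K] K) (p : MvPolynomial (Fin m) K') (n : Fin m →₀ ℕ) :
    (pil ℓ p).coeff n = ℓ (p.coeff n) := by
  classical
  rw [pil, coeff_sum]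
  simp only [coeff_monomial]
  rw [Finset.sum_ite_eq' p.support n (fun u => ℓ (p.coeff u))]
  split_ifs with hn
  · rfl
  · rw [MvPolynomial.notMem_support_iff.mp hn, map_zero]

lemma pil_add (ℓ : K' →ₗ[K] K) (p q : MvPolynomial (Fin m) K') :
    pil ℓ (p + q) = pil ℓ p + pil ℓ q := by
  ext n
  simp [coeff_pil, coeff_add]

lemma pil_mul_map (ℓ : K' →ₗ[K] K) (p : MvPolynomial (Fin m) K')
    (g : MvPolynomial (Fin m) K) :
    pil ℓ (p * MvPolynomial.map (algebraMap K K') g) = pil ℓ p * g := by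
  classical
  ext n
  rw [coeff_pil, coeff_mul, coeff_mul, map_sum]
  refine Finset.sum_congr rfl fun x _ => ?_
  rw [coeff_pil, coeff_map]
  have : p.coeff x.1 * algebraMap K K' (g.coeff x.2) = g.coeff x.2 • p.coeff x.1 := by
    rw [Algebra.smul_def, mul_comm]
  rw [this, map_smul, smul_eq_mul, mul_comm]

lemma pil_C_mul (ℓ : K' →ₗ[K] K) (a : K') (p : MvPolynomial (Fin m) K') :
    pil ℓ (MvPolynomial.C a * p) = pil (ℓ ∘ₗ LinearMap.mulLeft K a) p := by
  ext n
  simp [coeff_pil, coeff_C_mul]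

lemma pil_mul_mem (N : Ideal (MvPolynomial (Fin m) K))
    (c x : MvPolynomial (Fin m) K') (hx : ∀ ℓ : K' →ₗ[K] K, pil ℓ x ∈ N) :
    ∀ ℓ : K' →ₗ[K] K, pil ℓ (c * x) ∈ N := by
  induction c using MvPolynomial.induction_on generalizing x with
  | C a =>
      intro ℓ
      rw [pil_C_mul]
      exact hx _
  | add p q hp hq =>
      intro ℓ
      rw [add_mul, pil_add]
      exact N.add_mem (hp x hx ℓ) (hq x hx ℓ)
  | mul_X p j hp =>
      intro ℓ
      rw [mul_assoc]
      refine hp (X j * x) (fun ℓ' => ?_) ℓ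
      have hXx : (X j : MvPolynomial (Fin m) K') * x =
          x * MvPolynomial.map (algebraMap K K') (X j) := by
        rw [MvPolynomial.map_X, mul_comm]
      rw [hXx, pil_mul_map]
      exact N.mul_mem_right _ (hx ℓ')

lemma pil_mem_of_mem_map (N : Ideal (MvPolynomial (Fin m) K))
    {x : MvPolynomial (Fin m) K'}
    (hx : x ∈ N.map (MvPolynomial.map (algebraMap K K')))
    (ℓ : K' →ₗ[K] K) : pil ℓ x ∈ N := by
  have hx' : x ∈ Ideal.span (MvPolynomial.map (algebraMap K K') '' N) := hx
  refine Submodule.span_induction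
    (p := fun y _ => ∀ ℓ : K' →ₗ[K] K, pil ℓ y ∈ N) ?_ ?_ ?_ ?_ hx' ℓ
  · rintro _ ⟨g, hg, rfl⟩ ℓ'
    have : pil ℓ' (MvPolynomial.map (algebraMap K K') g) =
        pil ℓ' 1 * g := by
      rw [← pil_mul_map, one_mul]
    rw [this]
    exact N.mul_mem_left _ hg
  · intro ℓ'
    have : pil (m := m) ℓ' 0 = 0 := by
      ext n; simp [coeff_pil]
    rw [this]
    exact N.zero_mem
  · intro y z _ _ hy hz ℓ'
    rw [pil_add]
    exact N.add_mem (hy ℓ') (hz ℓ')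
  · intro a y _ hy ℓ'
    rw [smul_eq_mul]
    exact pil_mul_mem N a y hy ℓ'

lemma mem_map_of_forall_pil (N : Ideal (MvPolynomial (Fin m) K))
    (f : MvPolynomial (Fin m) K')
    (hf : ∀ ℓ : K' →ₗ[K] K, pil ℓ f ∈ N) :
    f ∈ N.map (MvPolynomial.map (algebraMap K K')) := by
  classical
  let b := Module.Basis.ofVectorSpace K K'
  set S : Finset (Module.Basis.ofVectorSpaceIndex K K') :=
    f.support.biUnion (fun n => (b.repr (f.coeff n)).support) with hS
  have key : f = ∑ i ∈ S, MvPolynomial.C (b i) *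
      MvPolynomial.map (algebraMap K K') (pil (b.coord i) f) := by
    ext n
    rw [coeff_sum]
    simp only [coeff_C_mul, coeff_map, coeff_pil, Module.Basis.coord_apply]
    have hterm : ∀ i, b i * algebraMap K K' (b.repr (f.coeff n) i) =
        b.repr (f.coeff n) i • b i := fun i => by
      rw [Algebra.smul_def, mul_comm]
    rw [Finset.sum_congr rfl fun i _ => hterm i]
    by_cases hn : n ∈ f.support
    · have hsub : (b.repr (f.coeff n)).support ⊆ S :=
        hS ▸ Finset.subset_biUnion_of_mem (fun u => (b.repr (f.coeff u)).support) hn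
      rw [← Finsupp.sum_of_support_subset _ hsub (fun i k => k • b i)
        (fun i _ => zero_smul K (b i))]
      exact (b.linearCombination_repr (f.coeff n)).symm
    · rw [MvPolynomial.notMem_support_iff.mp hn]
      simp
  rw [key]
  refine Ideal.sum_mem _ fun i _ => ?_
  exact Ideal.mul_mem_left _ _ (Ideal.mem_map_of_mem _ (hf (b.coord i)))

end Aux

theorem closure_diff_zeroLocus_redspec
    (m : ℕ) (K K' : Type*) [Field K] [Field K'] [Algebra K K']
    [CharZero K] [IsAlgClosed K']
    (N : Ideal (MvPolynomial (Fin m) K)) (hN : N.radical = N)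
    (h : MvPolynomial (Fin m) K)
    (hh : ∀ P ∈ N.minimalPrimes, h ∉ P) :
    zeroLocus K' (vanishingIdeal K'
        (zeroLocus K' (N.map (MvPolynomial.map (algebraMap K K'))) \
         zeroLocus K' (Ideal.span {MvPolynomial.map (algebraMap K K') h}))) =
      zeroLocus K' (N.map (MvPolynomial.map (algebraMap K K'))) := by
  classical
  set N' := N.map (MvPolynomial.map (algebraMap K K')) with hN'
  -- h is regular modulo N
  have hreg : ∀ g : MvPolynomial (Fin m) K, g * h ∈ N → g ∈ N := by
    intro g hg
    rw [← hN, ← Ideal.sInf_minimalPrimes, Ideal.mem_sInf]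
    intro P hP
    have hPp : P.IsPrime := hP.1.1
    have hgP : g * h ∈ P := hP.1.2 hg
    rcases hPp.mem_or_mem hgP with h1 | h2
    · exact h1
    · exact absurd h2 (hh P hP)
  have hregk : ∀ (g : MvPolynomial (Fin m) K) (k : ℕ), g * h ^ k ∈ N → g ∈ N := by
    intro g k
    induction k generalizing g with
    | zero => intro hg; rwa [pow_zero, mul_one] at hg
    | succ k ih =>
        intro hg
        rw [pow_succ, ← mul_assoc] at hg
        exact ih g (hreg _ hg)
  apply le_antisymm
  · apply zeroLocus_anti_mono
    intro p hp x hx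
    exact hx.1 p hp
  · intro x hx
    rw [mem_zeroLocus_iff]
    intro p hp
    have hme : p * MvPolynomial.map (algebraMap K K') h ∈
        vanishingIdeal K' (zeroLocus K' N') := by
      intro y hy
      rw [map_mul]
      by_cases hcase : aeval y (MvPolynomial.map (algebraMap K K') h) = 0
      · rw [hcase, mul_zero]
      · have hyS : y ∈ zeroLocus K' N' \
            zeroLocus K' (Ideal.span {MvPolynomial.map (algebraMap K K') h}) := by
          refine ⟨hy, fun hc => hcase ?_⟩
          exact hc _ (Ideal.subset_span rfl)
        rw [hp y hyS, zero_mul]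
    rw [vanishingIdeal_zeroLocus_eq_radical] at hme
    obtain ⟨k, hk⟩ := hme
    have hk' : p ^ k * MvPolynomial.map (algebraMap K K') (h ^ k) ∈ N' := by
      rw [map_pow, ← mul_pow]
      exact hk
    have hpk : p ^ k ∈ N' := by
      apply mem_map_of_forall_pil
      intro ℓ
      have hm := pil_mem_of_mem_map N hk' ℓ
      rw [pil_mul_map] at hm
      exact hregk _ k hm
    have hrad : p ∈ vanishingIdeal K' (zeroLocus K' N') :=
      radical_le_vanishingIdeal_zeroLocus (K := K') N' ⟨k, hpk⟩
    exact hrad x hx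
end

section
/- Let K be a field and K' an extension field of K. Let N and M be ideals of K[a₁,…,aₘ]. Then in K'^m one has the set identity V(N') \ V(M') = ⋃_{P ∈ minimalPrimes(N)} ( V(P') \ V((M + P)') ), where the union ranges over the minimal primes P of N in K[a₁,…,aₘ] and I' denotes the extension of an ideal I to K'[a₁,…,aₘ]. -/
open MvPolynomial

lemma mem_zeroLocus_map_iff {m : ℕ} {K K' : Type*} [Field K] [Field K'] [Algebra K K']
    (I : Ideal (MvPolynomial (Fin m) K)) (x : Fin m → K') :
    x ∈ zeroLocus K' (I.map (MvPolynomial.map (algebraMap K K'))) ↔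
      I ≤ RingHom.ker ((eval x).comp (MvPolynomial.map (algebraMap K K'))) := by
  constructor
  · intro hx p hp
    exact hx _ (Ideal.mem_map_of_mem _ hp)
  · intro h p hp
    have : I.map (MvPolynomial.map (algebraMap K K')) ≤ RingHom.ker (eval x) := by
      rw [Ideal.map_le_iff_le_comap]
      exact h
    exact this hp

theorem diff_zeroLocus_eq_iUnion_minimalPrimes
    (m : ℕ) (K K' : Type*) [Field K] [Field K'] [Algebra K K']
    (N M : Ideal (MvPolynomial (Fin m) K)) :
    zeroLocus K' (N.map (MvPolynomial.map (algebraMap K K'))) \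
        zeroLocus K' (M.map (MvPolynomial.map (algebraMap K K'))) =
      ⋃ P ∈ N.minimalPrimes,
        (zeroLocus K' (P.map (MvPolynomial.map (algebraMap K K'))) \
          zeroLocus K' ((M + P).map (MvPolynomial.map (algebraMap K K')))) := by
  ext x
  set Q := RingHom.ker ((eval x).comp (MvPolynomial.map (algebraMap K K'))) with hQ
  have hQprime : Q.IsPrime := RingHom.ker_isPrime _
  simp only [Set.mem_diff, Set.mem_iUnion, mem_zeroLocus_map_iff]
  constructor
  · rintro ⟨hN, hM⟩
    obtain ⟨P, hPmin, hPQ⟩ := Ideal.exists_minimalPrimes_le hN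
    refine ⟨P, hPmin, hPQ, fun hMP => hM ?_⟩
    exact le_trans (by exact le_sup_left : M ≤ M + P) hMP
  · rintro ⟨P, hPmin, hPQ, hMP⟩
    refine ⟨le_trans hPmin.1.2 hPQ, fun hM => hMP ?_⟩
    exact sup_le hM hPQ
end

section
/- Let K be a field of characteristic zero and K' an algebraically closed field extension of K. Let {N_i}_{i∈F} be a finite family of prime ideals of K[a₁,…,aₘ], and for each i let {M_{ij}}_{j∈G_i} be a finite family of prime ideals of K[a₁,…,aₘ] with N_i ⊊ M_{ij} for every j. Set C = ⋃_{i∈F} ( V(N_i') \ ⋃_{j∈G_i} V(M_{ij}') ) ⊆ K'^m. Then the Zariski closure of C in K'^m equals ⋃_{i∈F} V(N_i'). -/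
open MvPolynomial

section Aux
variable {K K' : Type*} [Field K] [Field K'] [Algebra K K'] {σ : Type*}

private noncomputable def lmapCoeff (ℓ : K' →ₗ[K] K) (p : MvPolynomial σ K') : MvPolynomial σ K :=
  AddMonoidAlgebra.ofCoeff (Finsupp.mapRange ℓ ℓ.map_zero (AddMonoidAlgebra.coeff p))

private lemma coeff_lmapCoeff (ℓ : K' →ₗ[K] K) (p : MvPolynomial σ K') (n : σ →₀ ℕ) :
    coeff n (lmapCoeff ℓ p) = ℓ (coeff n p) := rfl

private lemma lmapCoeff_map_mul (ℓ : K' →ₗ[K] K) (q : MvPolynomial σ K) (r : MvPolynomial σ K') :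
    lmapCoeff ℓ (MvPolynomial.map (algebraMap K K') q * r) = q * lmapCoeff ℓ r := by
  classical
  ext n
  rw [coeff_lmapCoeff, coeff_mul, coeff_mul, map_sum]
  refine Finset.sum_congr rfl fun x _ => ?_
  rw [coeff_map, coeff_lmapCoeff, ← Algebra.smul_def, map_smul, smul_eq_mul]

private lemma lmapCoeff_mem_of_mem_map {I : Ideal (MvPolynomial σ K)} {p : MvPolynomial σ K'}
    (hp : p ∈ I.map (MvPolynomial.map (algebraMap K K'))) (ℓ : K' →ₗ[K] K) :
    lmapCoeff ℓ p ∈ I := by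
  have H : ∀ p ∈ I.map (MvPolynomial.map (algebraMap K K')),
      ∀ (r : MvPolynomial σ K') (ℓ : K' →ₗ[K] K), lmapCoeff ℓ (r * p) ∈ I := by
    intro p hp
    refine Submodule.span_induction ?_ ?_ ?_ ?_ hp
    · rintro _ ⟨q, hq, rfl⟩ r ℓ
      rw [mul_comm, lmapCoeff_map_mul]
      exact I.mul_mem_right _ hq
    · intro r ℓ
      simpa [lmapCoeff] using I.zero_mem
    · intro x y _ _ hx hy r ℓ
      rw [mul_add]
      have : lmapCoeff ℓ (r * x + r * y) = lmapCoeff ℓ (r * x) + lmapCoeff ℓ (r * y) := by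
        ext n; simp [coeff_lmapCoeff, coeff_add]
      rw [this]
      exact I.add_mem (hx r ℓ) (hy r ℓ)
    · intro a x _ hx r ℓ
      rw [smul_eq_mul, ← mul_assoc]
      exact hx (r * a) ℓ
  simpa using H p hp 1 ℓ

private lemma exists_finset_reconstruct {η : Type*} (B : Module.Basis η K K') (p : MvPolynomial σ K') :
    ∃ S : Finset η, p = ∑ b ∈ S,
      C (B b) * (MvPolynomial.map (algebraMap K K')) (lmapCoeff (B.coord b) p) := by
  classical
  refine ⟨p.support.sup (fun n => (B.repr (coeff n p)).support), ?_⟩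
  set S := p.support.sup (fun n => (B.repr (coeff n p)).support) with hS
  ext n
  have hsub : (B.repr (coeff n p)).support ⊆ S := by
    by_cases hn : n ∈ p.support
    · exact Finset.le_sup (f := fun n => (B.repr (coeff n p)).support) hn
    · rw [MvPolynomial.notMem_support_iff.mp hn]
      simp [Finset.subset_iff]
  rw [MvPolynomial.coeff_sum]
  have : ∀ b ∈ S, coeff n (C (B b) * (MvPolynomial.map (algebraMap K K'))
      (lmapCoeff (B.coord b) p)) = (B.repr (coeff n p)) b • B b := by
    intro b _
    rw [coeff_C_mul, coeff_map, coeff_lmapCoeff, Module.Basis.coord_apply, Algebra.smul_def, mul_comm]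
  rw [Finset.sum_congr rfl this,
    ← Finsupp.sum_of_support_subset _ hsub (fun b x => x • B b) (by simp)]
  conv_lhs => rw [← B.linearCombination_repr (coeff n p)]
  rw [Finsupp.linearCombination_apply]

private lemma mem_map_of_forall_lmapCoeff {I : Ideal (MvPolynomial σ K)} {p : MvPolynomial σ K'}
    (h : ∀ ℓ : K' →ₗ[K] K, lmapCoeff ℓ p ∈ I) :
    p ∈ I.map (MvPolynomial.map (algebraMap K K')) := by
  obtain ⟨S, hS⟩ := exists_finset_reconstruct (Module.Basis.ofVectorSpace K K') p
  rw [hS]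
  refine Ideal.sum_mem _ fun b _ => Ideal.mul_mem_left _ _ ?_
  exact Ideal.mem_map_of_mem _ (h _)

private lemma mem_map_of_mul_map_mem {N : Ideal (MvPolynomial σ K)} (hN : N.IsPrime)
    {g : MvPolynomial σ K} (hg : g ∉ N) {f : MvPolynomial σ K'}
    (h : f * (MvPolynomial.map (algebraMap K K')) g ∈
      N.map (MvPolynomial.map (algebraMap K K'))) :
    f ∈ N.map (MvPolynomial.map (algebraMap K K')) := by
  refine mem_map_of_forall_lmapCoeff fun ℓ => ?_
  have := lmapCoeff_mem_of_mem_map h ℓ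
  rw [mul_comm, lmapCoeff_map_mul] at this
  exact (hN.mem_or_mem this).resolve_left hg

private lemma mem_radical_map_of_mul_map_mem {N : Ideal (MvPolynomial σ K)} (hN : N.IsPrime)
    {g : MvPolynomial σ K} (hg : g ∉ N) {f : MvPolynomial σ K'}
    (h : f * (MvPolynomial.map (algebraMap K K')) g ∈
      (N.map (MvPolynomial.map (algebraMap K K'))).radical) :
    f ∈ (N.map (MvPolynomial.map (algebraMap K K'))).radical := by
  obtain ⟨n, hn⟩ := h
  rcases Nat.eq_zero_or_pos n with rfl | hpos
  · rw [pow_zero] at hn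
    rw [Ideal.radical_eq_top.mpr ((Ideal.eq_top_iff_one _).mpr hn)]
    trivial
  · rw [mul_pow, ← map_pow] at hn
    have hgn : g ^ n ∉ N := fun hmem => hg (hN.mem_of_pow_mem n hmem)
    exact ⟨n, mem_map_of_mul_map_mem hN hgn hn⟩

end Aux

theorem closure_canSpecification_eq_iUnion_zeroLocus
    (m : ℕ) (K K' : Type*) [Field K] [Field K'] [Algebra K K']
    [CharZero K] [IsAlgClosed K']
    (ι : Type*) [Finite ι] (N : ι → Ideal (MvPolynomial (Fin m) K))
    (hN : ∀ i, (N i).IsPrime)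
    (κ : ι → Type*) [∀ i, Finite (κ i)]
    (M : (i : ι) → κ i → Ideal (MvPolynomial (Fin m) K))
    (hM : ∀ i j, (M i j).IsPrime)
    (hNM : ∀ i j, N i < M i j) :
    zeroLocus K' (vanishingIdeal K'
        (⋃ i, (zeroLocus K' ((N i).map (MvPolynomial.map (algebraMap K K'))) \
          ⋃ j, zeroLocus K' ((M i j).map (MvPolynomial.map (algebraMap K K')))))) =
      ⋃ i, zeroLocus K' ((N i).map (MvPolynomial.map (algebraMap K K'))) := by
  classical
  set φ := MvPolynomial.map (algebraMap K K') with hφ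
  set C := ⋃ i, (zeroLocus K' ((N i).map φ) \ ⋃ j, zeroLocus K' ((M i j).map φ)) with hC
  apply Set.Subset.antisymm
  · -- closure ⊆ union
    intro x hx
    by_contra hxU
    simp only [Set.mem_iUnion, not_exists] at hxU
    have := Fintype.ofFinite ι
    have hex : ∀ i, ∃ p ∈ (N i).map φ, aeval x p ≠ 0 := by
      intro i
      by_contra h
      push_neg at h
      exact hxU i (fun p hp => h p hp)
    choose p hpmem hpne using hex
    have hP : (∏ i, p i) ∈ vanishingIdeal K' C := by
      intro y hy
      obtain ⟨i, hyi⟩ := Set.mem_iUnion.mp hy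
      rw [map_prod]
      exact Finset.prod_eq_zero (Finset.mem_univ i) (hyi.1 _ (hpmem i))
    have h0 := hx _ hP
    rw [map_prod] at h0
    obtain ⟨i, _, hi0⟩ := Finset.prod_eq_zero_iff.mp h0
    exact hpne i hi0
  · -- union ⊆ closure
    intro x hx
    obtain ⟨i, hxi⟩ := Set.mem_iUnion.mp hx
    -- the key inclusion: vanishingIdeal of the i-th piece is ≤ radical
    have key : vanishingIdeal K' (zeroLocus K' ((N i).map φ) \ ⋃ j, zeroLocus K' ((M i j).map φ)) ≤
        ((N i).map φ).radical := by
      intro f hf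
      have := Fintype.ofFinite (κ i)
      choose g hgM hgN using fun j => SetLike.exists_of_lt (hNM i j)
      have hg0 : (∏ j, g j) ∉ N i := by
        intro hmem
        obtain ⟨j, _, hj⟩ := (Ideal.IsPrime.prod_mem_iff (hp := hN i)).mp hmem
        exact hgN j hj
      have hkey : f * φ (∏ j, g j) ∈ vanishingIdeal K' (zeroLocus K' ((N i).map φ)) := by
        intro y hy
        by_cases hyM : y ∈ ⋃ j, zeroLocus K' ((M i j).map φ)
        · obtain ⟨j, hyj⟩ := Set.mem_iUnion.mp hyM
          rw [map_mul, map_prod, map_prod]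
          have : aeval y (φ (g j)) = 0 := hyj _ (Ideal.mem_map_of_mem φ (hgM j))
          rw [Finset.prod_eq_zero (Finset.mem_univ j) this, mul_zero]
        · rw [map_mul, hf y ⟨hy, hyM⟩, zero_mul]
      rw [vanishingIdeal_zeroLocus_eq_radical] at hkey
      exact mem_radical_map_of_mul_map_mem (hN i) hg0 hkey
    -- conclude
    have h1 : vanishingIdeal K' C ≤ ((N i).map φ).radical :=
      le_trans (vanishingIdeal_anti_mono (Set.subset_iUnion _ i)) key
    intro f hf
    obtain ⟨n, hn⟩ := h1 hf
    have h0 := hxi _ hn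
    rw [map_pow] at h0
    exact (pow_eq_zero_iff'.mp h0).1
end
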